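/- Let p = 7, ε = 3 a generator of U_7, M = {1,2,4} the subgroup of order 3, and let y ∈ C^7 be the inverse DFT of the vector z with z(0) = 1/√21, z(1) = 1/√7, z(3) = 1/√7, and z(ℓ) = 0 otherwise. Then { T_k D_m y : m ∈ M, k ∈ Z_7 } is a Parseval frame for C^7: Σ_{m∈M} Σ_{k=0}^{6} |⟨x, T_k D_m y⟩|² = ‖x‖² for all x ∈ C^7. -/

import Mathlib

open scoped BigOperators Classical Pointwise
open Finset

noncomputable section

/-- Translation operator on C^p. -/
def Tr {p : ℕ} (k : ZMod p) (x : ZMod p → ℂ) : ZMod p → ℂ := fun j => x (j - k)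

/-- Cyclic dilation operator on C^p. -/
def Dil {p : ℕ} (m : ZMod p) (x : ZMod p → ℂ) : ZMod p → ℂ := fun j => x (m⁻¹ * j)

/-- Unitary discrete Fourier transform on C^p. -/
def dft (p : ℕ) [NeZero p] (x : ZMod p → ℂ) : ZMod p → ℂ := fun ℓ =>
  (Real.sqrt p : ℂ)⁻¹ *
    ∑ k : ZMod p, x k * Complex.exp (-(2 * Real.pi * Complex.I * (ℓ.val * k.val)) / p)

/-- Inner product on C^p. -/
def ip (p : ℕ) [NeZero p] (x y : ZMod p → ℂ) : ℂ :=
  ∑ g : ZMod p, x g * (starRingEnd ℂ) (y g)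

/-! ### Auxiliary: the character `χ` on `ZMod 7` -/

def PWF.ζ : ℂ := Complex.exp (2 * Real.pi * Complex.I / 7)

namespace PWF

def χ (a : ZMod 7) : ℂ := ζ ^ a.val

lemma zeta7 : ζ ^ 7 = 1 := by
  rw [ζ, ← Complex.exp_nat_mul]
  rw [show ((7:ℕ):ℂ) * (2 * Real.pi * Complex.I / 7) = 2 * Real.pi * Complex.I by
    push_cast; ring]
  exact Complex.exp_two_pi_mul_I

lemma zeta_pow_mod (n : ℕ) : ζ ^ n = ζ ^ (n % 7) := by
  conv_lhs => rw [← Nat.div_add_mod n 7, pow_add, pow_mul, zeta7, one_pow, one_mul]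

lemma chi_nat (n : ℕ) : χ (n : ZMod 7) = ζ ^ n := by
  rw [χ, ZMod.val_natCast, ← zeta_pow_mod]

lemma chi_add (a b : ZMod 7) : χ (a + b) = χ a * χ b := by
  have h := chi_nat (a.val + b.val)
  rw [Nat.cast_add, ZMod.natCast_val, ZMod.natCast_val, ZMod.cast_id, ZMod.cast_id,
    pow_add] at h
  rw [h, χ, χ]

lemma chi_mul_val (a b : ZMod 7) : χ (a * b) = (ζ ^ a.val) ^ b.val := by
  have h := chi_nat (a.val * b.val)
  rw [Nat.cast_mul, ZMod.natCast_val, ZMod.natCast_val, ZMod.cast_id, ZMod.cast_id,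
    pow_mul] at h
  rw [h]

lemma zeta_ne : ζ ≠ 0 := Complex.exp_ne_zero _

lemma chi_zero : χ 0 = 1 := by simp [χ]

lemma chi_neg (a : ZMod 7) : χ (-a) = (χ a)⁻¹ := by
  have h : χ (-a) * χ a = 1 := by rw [← chi_add, neg_add_cancel, chi_zero]
  exact eq_inv_of_mul_eq_one_left h

lemma conj_chi (a : ZMod 7) : (starRingEnd ℂ) (χ a) = χ (-a) := by
  have h1 : (starRingEnd ℂ) ζ = ζ⁻¹ := by
    rw [ζ, ← Complex.exp_conj, ← Complex.exp_neg]
    congr 1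
    simp [map_div₀, map_ofNat, Complex.conj_I]
    ring
  rw [χ, map_pow, h1, chi_neg, χ, inv_pow]

lemma chi_ne_one {a : ZMod 7} (ha : a ≠ 0) : χ a ≠ 1 := by
  intro h
  rw [χ, ζ, ← Complex.exp_nat_mul, Complex.exp_eq_one_iff] at h
  obtain ⟨n, hn⟩ := h
  have hpi : (2 * Real.pi * Complex.I) ≠ 0 := by
    simp [Real.pi_ne_zero, Complex.I_ne_zero]
  have h2 : ((a.val : ℂ)) * (2 * Real.pi * Complex.I)
      = (7 * n) * (2 * Real.pi * Complex.I) := by linear_combination 7 * hn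
  have h3 : ((a.val : ℂ)) = 7 * n := mul_right_cancel₀ hpi h2
  have h7 : (a.val : ℤ) = 7 * n := by exact_mod_cast h3
  have hlt : a.val < 7 := a.val_lt
  have hne : a.val ≠ 0 := by simpa [ZMod.val_eq_zero] using ha
  omega

lemma sum_chi (b : ZMod 7) : ∑ k : ZMod 7, χ (b * k) = if b = 0 then 7 else 0 := by
  split_ifs with hb
  · subst hb
    simp [chi_zero, Finset.card_univ]
  · have hsum : ∑ k : ZMod 7, χ (b * k) = ∑ i ∈ Finset.range 7, (ζ ^ b.val) ^ i := by
      simp_rw [chi_mul_val]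
      exact Fin.sum_univ_eq_sum_range (fun i => (ζ ^ b.val) ^ i) 7
    rw [hsum, geom_sum_eq (by rw [← χ]; exact chi_ne_one hb)]
    rw [← pow_mul, mul_comm, pow_mul, zeta7, one_pow, sub_self, zero_div]

abbrev c7 : ℂ := ((Real.sqrt ((7:ℕ)) : ℝ) : ℂ)⁻¹

lemma exp_eq_chi (ℓ k : ZMod 7) :
    Complex.exp (-(2 * Real.pi * Complex.I * (ℓ.val * k.val)) / ((7:ℕ):ℂ)) = χ (-(ℓ * k)) := by
  rw [chi_neg, chi_mul_val, ← pow_mul, ζ, ← Complex.exp_nat_mul, ← Complex.exp_neg]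
  congr 1
  push_cast
  ring

lemma dft_eq (v : ZMod 7 → ℂ) (ℓ : ZMod 7) :
    dft 7 v ℓ = c7 * ∑ k : ZMod 7, v k * χ (-(ℓ * k)) := by
  rw [dft]
  congr 1
  exact Finset.sum_congr rfl fun k _ => by rw [exp_eq_chi]

lemma c7_sq : c7 * c7 = 7⁻¹ := by
  rw [c7, ← mul_inv, ← Complex.ofReal_mul, Real.mul_self_sqrt (by norm_num)]
  norm_num

lemma conj_c7 : (starRingEnd ℂ) c7 = c7 := by
  rw [c7, ← Complex.ofReal_inv, Complex.conj_ofReal]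

lemma plancherel (u v : ZMod 7 → ℂ) : ip 7 (dft 7 u) (dft 7 v) = ip 7 u v := by
  unfold ip
  simp_rw [dft_eq]
  have key : ∀ ℓ : ZMod 7,
      (c7 * ∑ k : ZMod 7, u k * χ (-(ℓ * k))) *
        (starRingEnd ℂ) (c7 * ∑ j : ZMod 7, v j * χ (-(ℓ * j))) =
      (c7 * c7) * ∑ k : ZMod 7, ∑ j : ZMod 7,
        u k * (starRingEnd ℂ) (v j) * χ (-(ℓ * k)) * χ (ℓ * j) := by
    intro ℓ
    rw [map_mul, conj_c7, mul_mul_mul_comm]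
    congr 1
    rw [map_sum, Finset.sum_mul_sum]
    refine Finset.sum_congr rfl fun k _ => Finset.sum_congr rfl fun j _ => ?_
    rw [map_mul, conj_chi, neg_neg]
    ring
  simp_rw [key, ← Finset.mul_sum, c7_sq]
  rw [Finset.sum_comm]
  have h2 : ∀ k : ZMod 7, ∑ ℓ : ZMod 7, ∑ j : ZMod 7,
      u k * (starRingEnd ℂ) (v j) * χ (-(ℓ * k)) * χ (ℓ * j)
      = 7 * (u k * (starRingEnd ℂ) (v k)) := by
    intro k
    rw [Finset.sum_comm]
    have h3 : ∀ j : ZMod 7, ∑ ℓ : ZMod 7,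
        u k * (starRingEnd ℂ) (v j) * χ (-(ℓ * k)) * χ (ℓ * j)
        = u k * (starRingEnd ℂ) (v j) * (if (j - k) = 0 then (7:ℂ) else 0) := by
      intro j
      rw [← sum_chi (j - k), Finset.mul_sum]
      refine Finset.sum_congr rfl fun ℓ _ => ?_
      rw [mul_assoc, ← chi_add, show -(ℓ * k) + ℓ * j = (j - k) * ℓ by ring]
    simp_rw [h3, sub_eq_zero, mul_ite, mul_zero]
    rw [Finset.sum_ite_eq' Finset.univ k]
    simp
    ring
  simp_rw [h2, ← Finset.mul_sum]
  ring

lemma dft_tr_dil (y : ZMod 7 → ℂ) (m k ℓ : ZMod 7) (hm : m ≠ 0) :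
    dft 7 (Tr k (Dil m y)) ℓ = χ (-(ℓ * k)) * dft 7 y (m * ℓ) := by
  haveI : Fact (Nat.Prime 7) := ⟨by norm_num⟩
  rw [dft_eq, dft_eq, Finset.mul_sum, Finset.mul_sum, Finset.mul_sum]
  rw [← Equiv.sum_comp ((Equiv.mulLeft₀ m hm).trans (Equiv.addRight k))
    (fun j => c7 * (Tr k (Dil m y) j * χ (-(ℓ * j))))]
  refine Finset.sum_congr rfl fun j _ => ?_
  simp only [Equiv.trans_apply, Equiv.mulLeft₀_apply, Equiv.coe_addRight, Tr, Dil]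
  have h1 : m⁻¹ * (m * j + k - k) = j := by field_simp; ring
  rw [h1]
  have h2 : χ (-(ℓ * (m * j + k))) = χ (-(ℓ * k)) * χ (-(m * ℓ * j)) := by
    rw [← chi_add]; congr 1; ring
  rw [h2]
  ring

lemma parseval_coeffs (a : ZMod 7 → ℂ) :
    ∑ k : ZMod 7, (∑ ℓ : ZMod 7, a ℓ * χ (ℓ * k)) *
      (starRingEnd ℂ) (∑ ℓ : ZMod 7, a ℓ * χ (ℓ * k))
    = 7 * ∑ ℓ : ZMod 7, a ℓ * (starRingEnd ℂ) (a ℓ) := by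
  have key : ∀ k : ZMod 7,
      (∑ ℓ : ZMod 7, a ℓ * χ (ℓ * k)) * (starRingEnd ℂ) (∑ ℓ : ZMod 7, a ℓ * χ (ℓ * k))
      = ∑ ℓ : ZMod 7, ∑ j : ZMod 7,
          a ℓ * (starRingEnd ℂ) (a j) * χ (ℓ * k) * χ (-(j * k)) := by
    intro k
    rw [map_sum, Finset.sum_mul_sum]
    refine Finset.sum_congr rfl fun ℓ _ => Finset.sum_congr rfl fun j _ => ?_
    rw [map_mul, conj_chi]
    ring
  simp_rw [key]
  rw [Finset.sum_comm]
  have h2 : ∀ ℓ : ZMod 7, ∑ k : ZMod 7, ∑ j : ZMod 7,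
      a ℓ * (starRingEnd ℂ) (a j) * χ (ℓ * k) * χ (-(j * k))
      = 7 * (a ℓ * (starRingEnd ℂ) (a ℓ)) := by
    intro ℓ
    rw [Finset.sum_comm]
    have h3 : ∀ j : ZMod 7, ∑ k : ZMod 7,
        a ℓ * (starRingEnd ℂ) (a j) * χ (ℓ * k) * χ (-(j * k))
        = a ℓ * (starRingEnd ℂ) (a j) * (if (ℓ - j) = 0 then (7:ℂ) else 0) := by
      intro j
      rw [← sum_chi (ℓ - j), Finset.mul_sum]
      refine Finset.sum_congr rfl fun k _ => ?_
      rw [mul_assoc, ← chi_add, show ℓ * k + -(j * k) = (ℓ - j) * k by ring]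
    simp_rw [h3, sub_eq_zero, mul_ite, mul_zero]
    rw [Finset.sum_ite_eq Finset.univ ℓ]
    simp
    ring
  simp_rw [h2, ← Finset.mul_sum]

end PWF

open PWF in
theorem parseval_wavelet_frame_seven
    (z y : ZMod 7 → ℂ)
    (hz : z = fun ℓ =>
      if ℓ = 0 then ((Real.sqrt 21 : ℝ) : ℂ)⁻¹
      else if ℓ = 1 then ((Real.sqrt 7 : ℝ) : ℂ)⁻¹
      else if ℓ = 3 then ((Real.sqrt 7 : ℝ) : ℂ)⁻¹
      else 0)
    (hy : dft 7 y = z) (x : ZMod 7 → ℂ) :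
    ∑ m ∈ ({1, 2, 4} : Finset (ZMod 7)), ∑ k : ZMod 7,
        ‖ip 7 x (Tr k (Dil m y))‖ ^ 2 = ∑ g : ZMod 7, ‖x g‖ ^ 2 := by
  -- reduce to a complex identity
  have cast1 : ∀ w : ℂ, ((‖w‖ ^ 2 : ℝ) : ℂ) = w * (starRingEnd ℂ) w := by
    intro w
    rw [Complex.mul_conj]
    norm_cast
    rw [← Complex.sq_norm]
  apply Complex.ofReal_injective
  simp only [Complex.ofReal_sum, cast1]
  -- rewrite the inner products via the Fourier transform
  have hS : ∀ m ∈ ({1, 2, 4} : Finset (ZMod 7)), ∀ k : ZMod 7,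
      ip 7 x (Tr k (Dil m y))
      = ∑ ℓ : ZMod 7, (dft 7 x ℓ * (starRingEnd ℂ) (z (m * ℓ))) * χ (ℓ * k) := by
    intro m hm k
    have hm0 : m ≠ 0 := by fin_cases hm <;> decide
    rw [← plancherel x (Tr k (Dil m y)), ip]
    refine Finset.sum_congr rfl fun ℓ _ => ?_
    rw [dft_tr_dil y m k ℓ hm0, hy, map_mul, conj_chi, neg_neg]
    ring
  calc ∑ m ∈ ({1, 2, 4} : Finset (ZMod 7)), ∑ k : ZMod 7,
        ip 7 x (Tr k (Dil m y)) * (starRingEnd ℂ) (ip 7 x (Tr k (Dil m y)))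
      = ∑ m ∈ ({1, 2, 4} : Finset (ZMod 7)), 7 * ∑ ℓ : ZMod 7,
          (dft 7 x ℓ * (starRingEnd ℂ) (z (m * ℓ))) *
            (starRingEnd ℂ) (dft 7 x ℓ * (starRingEnd ℂ) (z (m * ℓ))) := by
        refine Finset.sum_congr rfl fun m hm => ?_
        rw [← parseval_coeffs (fun ℓ => dft 7 x ℓ * (starRingEnd ℂ) (z (m * ℓ)))]
        exact Finset.sum_congr rfl fun k _ => by rw [hS m hm k]
    _ = ∑ ℓ : ZMod 7, (dft 7 x ℓ * (starRingEnd ℂ) (dft 7 x ℓ)) *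
          ∑ m ∈ ({1, 2, 4} : Finset (ZMod 7)),
            7 * ((starRingEnd ℂ) (z (m * ℓ)) * z (m * ℓ)) := by
        simp_rw [Finset.mul_sum]
        rw [Finset.sum_comm]
        refine Finset.sum_congr rfl fun ℓ _ => ?_
        refine Finset.sum_congr rfl fun m _ => ?_
        simp only [map_mul, Complex.conj_conj]
        ring
    _ = ∑ ℓ : ZMod 7, dft 7 x ℓ * (starRingEnd ℂ) (dft 7 x ℓ) := by
        refine Finset.sum_congr rfl fun ℓ _ => ?_
        have hfac : ∑ m ∈ ({1, 2, 4} : Finset (ZMod 7)),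
            (7:ℂ) * ((starRingEnd ℂ) (z (m * ℓ)) * z (m * ℓ)) = 1 := by
          have h21 : ((Real.sqrt 21 : ℝ) : ℂ)⁻¹ * ((Real.sqrt 21 : ℝ) : ℂ)⁻¹ = (21:ℂ)⁻¹ := by
            rw [← mul_inv, ← Complex.ofReal_mul, Real.mul_self_sqrt (by norm_num)]
            norm_num
          have h7 : ((Real.sqrt 7 : ℝ) : ℂ)⁻¹ * ((Real.sqrt 7 : ℝ) : ℂ)⁻¹ = (7:ℂ)⁻¹ := by
            rw [← mul_inv, ← Complex.ofReal_mul, Real.mul_self_sqrt (by norm_num)]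
            norm_num
          rw [Finset.sum_insert (by decide), Finset.sum_insert (by decide),
            Finset.sum_singleton]
          fin_cases ℓ <;>
            simp (config := { decide := true }) only [hz] <;>
            norm_num [map_inv₀, Complex.conj_ofReal] <;>
            simp only [h21, h7] <;>
            norm_num
        rw [hfac, mul_one]
    _ = ∑ g : ZMod 7, x g * (starRingEnd ℂ) (x g) := by
        have := plancherel x x
        rw [ip, ip] at this
        exact this
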